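/- For the Gaussian scale model in dimension d with s = e^{2θ*} and Gaussian kernel of lengthscale l, the mean estimating-function value satisfies M̄ = -(2π)^{-d/2} (l² + 2s)^{-d/2} (ds/(s+l²)) (1 - s/(l²+2s)). In particular M̄ ≠ 0 for all finite l > 0, d ≥ 1, s > 0. -/

import Mathlib

open Finset MeasureTheory

/-- `d`-dimensional isotropic Gaussian density with mean `m` and variance `v`. -/
noncomputable def gaussPdfD (d : ℕ) (x m : Fin d → ℝ) (v : ℝ) : ℝ :=
  (2 * Real.pi * v) ^ (-(d : ℝ) / 2)
    * Real.exp (-(∑ i, (x i - m i) ^ 2) / (2 * v))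

open Real Set in
lemma my_integral_sq_exp_neg_mul_sq {b : ℝ} (hb : 0 < b) :
    ∫ x : ℝ, x ^ 2 * Real.exp (-b * x ^ 2) = Real.sqrt (Real.pi / b) / (2 * b) := by
  have hInt : Integrable fun x : ℝ => x ^ 2 * Real.exp (-b * x ^ 2) := by
    have h := integrable_rpow_mul_exp_neg_mul_sq hb (s := 2) (by norm_num)
    refine h.congr (Filter.Eventually.of_forall fun x => ?_)
    simp only [Real.rpow_two]
  have heven : ∀ x : ℝ, (-x) ^ 2 * Real.exp (-b * (-x) ^ 2)
      = x ^ 2 * Real.exp (-b * x ^ 2) := by intro x; rw [neg_pow]; ring_nf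
  have h1 : ∫ x in Iic (0:ℝ), x ^ 2 * Real.exp (-b * x ^ 2)
      = ∫ x in Ioi (0:ℝ), x ^ 2 * Real.exp (-b * x ^ 2) := by
    calc ∫ x in Iic (0:ℝ), x ^ 2 * Real.exp (-b * x ^ 2)
        = ∫ x in Iic (0:ℝ), (-x) ^ 2 * Real.exp (-b * (-x) ^ 2) := by
          refine setIntegral_congr_fun measurableSet_Iic fun x _ => (heven x).symm
      _ = ∫ x in Ioi (-(0:ℝ)), x ^ 2 * Real.exp (-b * x ^ 2) :=
          integral_comp_neg_Iic 0 (fun x => x ^ 2 * Real.exp (-b * x ^ 2))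
      _ = _ := by rw [neg_zero]
  have hsplit : ∫ x : ℝ, x ^ 2 * Real.exp (-b * x ^ 2)
      = 2 * ∫ x in Ioi (0:ℝ), x ^ 2 * Real.exp (-b * x ^ 2) := by
    rw [← intervalIntegral.integral_Iic_add_Ioi hInt.integrableOn hInt.integrableOn, h1]; ring
  have hIoi : ∫ x in Ioi (0:ℝ), x ^ 2 * Real.exp (-b * x ^ 2)
      = b ^ (-((2:ℝ)+1)/2) * (1/2) * Real.Gamma (((2:ℝ)+1)/2) := by
    rw [← integral_rpow_mul_exp_neg_mul_rpow (by norm_num : (0:ℝ) < 2)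
      (by norm_num : (-1:ℝ) < 2) hb]
    refine setIntegral_congr_fun measurableSet_Ioi fun x hx => ?_
    simp only [Real.rpow_two]
  have hGamma : Real.Gamma (((2:ℝ)+1)/2) = Real.sqrt Real.pi / 2 := by
    rw [show (((2:ℝ)+1)/2 : ℝ) = 1/2 + 1 by norm_num,
      Real.Gamma_add_one (by norm_num), Real.Gamma_one_half_eq]; ring
  have hb32 : (b : ℝ) ^ (-((2:ℝ)+1)/2) = 1 / (Real.sqrt b * b) := by
    rw [show (-((2:ℝ)+1)/2 : ℝ) = -(1/2 + 1) by norm_num, Real.rpow_neg hb.le,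
      Real.rpow_add hb, Real.rpow_one, ← Real.sqrt_eq_rpow, one_div]
  have hsb : Real.sqrt (Real.pi / b) = Real.sqrt Real.pi / Real.sqrt b :=
    Real.sqrt_div Real.pi_pos.le b
  rw [hsplit, hIoi, hGamma, hb32, hsb]
  have h2 : Real.sqrt b ≠ 0 := (Real.sqrt_pos.mpr hb).ne'
  have h3 : Real.sqrt b * Real.sqrt b = b := Real.mul_self_sqrt hb.le
  field_simp

/-- Mean estimating-function value `M̄` for the Gaussian scale model in
dimension `d`, with `s = e^{2θ*}` and Gaussian kernel of lengthscale `l`.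
After integration by parts,
`M̄ = −∫ (ds/(s+l²) − |y|²s/(s+l²)²) φ(y;0,s+l²) φ(y;0,s) dy`, and this
equals `−(2π)^{-d/2}(l²+2s)^{-d/2}(ds/(s+l²))(1 − s/(l²+2s))`; in particular
`M̄ ≠ 0` for all finite `l > 0`, `d ≥ 1`, `s > 0`. -/
theorem gaussian_scale_mean_estimating_function (d : ℕ) (hd : 1 ≤ d)
    (l s : ℝ) (hl : 0 < l) (hs : 0 < s) :
    (∫ y : Fin d → ℝ,
        -(((d : ℝ) * s / (s + l ^ 2)) - (∑ i, y i ^ 2) * s / (s + l ^ 2) ^ 2)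
          * gaussPdfD d y 0 (s + l ^ 2) * gaussPdfD d y 0 s)
      = -((2 * Real.pi) ^ (-(d : ℝ) / 2) * (l ^ 2 + 2 * s) ^ (-(d : ℝ) / 2)
          * ((d : ℝ) * s / (s + l ^ 2)) * (1 - s / (l ^ 2 + 2 * s)))
    ∧ (∫ y : Fin d → ℝ,
        -(((d : ℝ) * s / (s + l ^ 2)) - (∑ i, y i ^ 2) * s / (s + l ^ 2) ^ 2)
          * gaussPdfD d y 0 (s + l ^ 2) * gaussPdfD d y 0 s) ≠ 0 := by
  have hπ : 0 < Real.pi := Real.pi_pos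
  set a : ℝ := s + l ^ 2 with ha
  have hA : 0 < a := by positivity
  have hL : a + s = l ^ 2 + 2 * s := by rw [ha]; ring
  have hLpos : 0 < l ^ 2 + 2 * s := by positivity
  set b0 : ℝ := (a + s) / (2 * a * s) with hb0def
  have hb0 : 0 < b0 := by positivity
  set g0 : ℝ → ℝ := fun x => Real.exp (-b0 * x ^ 2) with hg0
  set g2 : ℝ → ℝ := fun x => x ^ 2 * Real.exp (-b0 * x ^ 2) with hg2
  set K : ℝ := (2 * Real.pi * a) ^ (-(d : ℝ) / 2) * (2 * Real.pi * s) ^ (-(d : ℝ) / 2) with hK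
  set J : ℝ := Real.sqrt (Real.pi / b0) with hJ
  have hJpos : 0 < J := Real.sqrt_pos.mpr (by positivity)
  -- pointwise identity
  have hpt : ∀ y : Fin d → ℝ,
      -(((d : ℝ) * s / a) - (∑ i, y i ^ 2) * s / a ^ 2)
          * gaussPdfD d y 0 a * gaussPdfD d y 0 s
      = (∑ i, (K * (s / a ^ 2)) * ∏ j, (if j = i then g2 else g0) (y j))
        + (-(K * ((d : ℝ) * s / a))) * ∏ j, g0 (y j) := by
    intro y
    have hP : ∏ j, g0 (y j) = Real.exp (-(b0 * (∑ i, y i ^ 2))) := by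
      rw [hg0, ← Real.exp_sum]
      congr 1
      rw [Finset.mul_sum, ← Finset.sum_neg_distrib]
      exact Finset.sum_congr rfl fun i _ => by ring
    have hprod_i : ∀ i : Fin d, (∏ j, (if j = i then g2 else g0) (y j))
        = y i ^ 2 * ∏ j, g0 (y j) := by
      intro i
      rw [← Finset.mul_prod_erase univ (fun j => (if j = i then g2 else g0) (y j))
        (Finset.mem_univ i),
        ← Finset.mul_prod_erase univ (fun j => g0 (y j)) (Finset.mem_univ i)]
      rw [if_pos rfl, Finset.prod_congr rfl
        (fun j hj => by rw [if_neg (Finset.ne_of_mem_erase hj)])]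
      rw [hg2, hg0]
      ring
    have hexp : Real.exp (-(∑ i, y i ^ 2) / (2 * a)) * Real.exp (-(∑ i, y i ^ 2) / (2 * s))
        = Real.exp (-(b0 * (∑ i, y i ^ 2))) := by
      rw [← Real.exp_add]
      congr 1
      rw [hb0def]
      field_simp
      ring
    simp only [gaussPdfD, Pi.zero_apply, sub_zero]
    simp only [hprod_i]
    calc -(((d : ℝ) * s / a) - (∑ i, y i ^ 2) * s / a ^ 2)
          * ((2 * Real.pi * a) ^ (-(d : ℝ) / 2) * Real.exp (-(∑ i, y i ^ 2) / (2 * a)))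
          * ((2 * Real.pi * s) ^ (-(d : ℝ) / 2) * Real.exp (-(∑ i, y i ^ 2) / (2 * s)))
        = -(((d : ℝ) * s / a) - (∑ i, y i ^ 2) * s / a ^ 2) * K *
            (Real.exp (-(∑ i, y i ^ 2) / (2 * a)) * Real.exp (-(∑ i, y i ^ 2) / (2 * s))) := by
          rw [hK]; ring
      _ = -(((d : ℝ) * s / a) - (∑ i, y i ^ 2) * s / a ^ 2) * K *
            Real.exp (-(b0 * (∑ i, y i ^ 2))) := by rw [hexp]
      _ = (∑ i, (K * (s / a ^ 2)) * (y i ^ 2 * ∏ j, g0 (y j)))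
            + (-(K * ((d : ℝ) * s / a))) * ∏ j, g0 (y j) := by
          rw [hP]
          have hsum : (∑ i, (K * (s / a ^ 2)) * (y i ^ 2 * Real.exp (-(b0 * (∑ i, y i ^ 2)))))
              = (∑ i, y i ^ 2) * ((K * (s / a ^ 2)) * Real.exp (-(b0 * (∑ i, y i ^ 2)))) := by
            rw [Finset.sum_mul]
            exact Finset.sum_congr rfl fun i _ => by ring
          rw [hsum, ← hexp]
          try ring
  rw [integral_congr_ae (Filter.Eventually.of_forall hpt)]
  -- integrability
  have hig0 : Integrable g0 := integrable_exp_neg_mul_sq hb0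
  have hig2 : Integrable g2 := by
    have h := integrable_rpow_mul_exp_neg_mul_sq hb0 (s := 2) (by norm_num)
    refine h.congr (Filter.Eventually.of_forall fun x => ?_)
    simp only [Real.rpow_two]
    rfl
  have hprodInt : ∀ i : Fin d,
      Integrable (fun y : Fin d → ℝ => ∏ j, (if j = i then g2 else g0) (y j)) := by
    intro i
    exact Integrable.fintype_prod (f := fun j => if j = i then g2 else g0)
      (fun j => by by_cases h : j = i <;> simp [h, hig0, hig2])
  have hprod0 : Integrable (fun y : Fin d → ℝ => ∏ j, g0 (y j)) :=
    Integrable.fintype_prod (f := fun _ => g0) fun _ => hig0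
  rw [integral_add
      (integrable_finset_sum _ (fun i _ => ((hprodInt i).const_mul _)))
      (hprod0.const_mul _),
    integral_finset_sum _ (fun i _ => ((hprodInt i).const_mul _))]
  simp only [integral_const_mul]
  -- evaluate the product integrals
  have hJ0 : (∫ x : ℝ, g0 x) = J := by rw [hg0, hJ]; exact integral_gaussian b0
  have hJ2 : (∫ x : ℝ, g2 x) = J / (2 * b0) := by
    rw [hg2, hJ]; exact my_integral_sq_exp_neg_mul_sq hb0
  have hI0 : (∫ y : Fin d → ℝ, ∏ j, g0 (y j)) = J ^ d := by
    rw [volume_pi, MeasureTheory.integral_fintype_prod_eq_pow (ι := Fin d) g0, hJ0, Fintype.card_fin]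
  have hI2 : ∀ i : Fin d,
      (∫ y : Fin d → ℝ, ∏ j, (if j = i then g2 else g0) (y j)) = J ^ d / (2 * b0) := by
    intro i
    rw [volume_pi, MeasureTheory.integral_fintype_prod_eq_prod (ι := Fin d) (fun j => if j = i then g2 else g0)]
    rw [← Finset.mul_prod_erase univ (fun j => ∫ x, (if j = i then g2 else g0) x)
      (Finset.mem_univ i)]
    rw [if_pos rfl, Finset.prod_congr rfl
      (fun j hj => by rw [if_neg (Finset.ne_of_mem_erase hj)])]
    rw [hJ2, hJ0, Finset.prod_const, Finset.card_erase_of_mem (Finset.mem_univ i),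
      Finset.card_univ, Fintype.card_fin]
    rw [div_mul_eq_mul_div, ← pow_succ']
    congr 2
    omega
  simp only [hI2, hI0]
  rw [Finset.sum_const, Finset.card_univ, Fintype.card_fin, nsmul_eq_mul]
  -- compute K * J ^ d
  have hKJ : K * J ^ d = (2 * Real.pi) ^ (-(d : ℝ) / 2) * (l ^ 2 + 2 * s) ^ (-(d : ℝ) / 2) := by
    have h1 : Real.pi / b0 = 2 * Real.pi * (a * s / (a + s)) := by
      rw [hb0def]; field_simp
    have hJd : J ^ d = (2 * Real.pi * (a * s / (a + s))) ^ ((d : ℝ) / 2) := by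
      rw [hJ, h1, Real.sqrt_eq_rpow, ← Real.rpow_natCast
        ((2 * Real.pi * (a * s / (a + s))) ^ ((1:ℝ)/2)) d, ← Real.rpow_mul (by positivity)]
      congr 1
      ring
    have e1 : -(d : ℝ) / 2 = -((d : ℝ) / 2) := by ring
    rw [e1]
    calc K * J ^ d
        = ((2 * Real.pi * a)⁻¹) ^ ((d : ℝ) / 2) * ((2 * Real.pi * s)⁻¹) ^ ((d : ℝ) / 2)
            * (2 * Real.pi * (a * s / (a + s))) ^ ((d : ℝ) / 2) := by
          rw [hK, hJd, e1, Real.rpow_neg (by positivity : (0:ℝ) ≤ 2 * Real.pi * a),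
            Real.rpow_neg (by positivity : (0:ℝ) ≤ 2 * Real.pi * s),
            ← Real.inv_rpow (by positivity : (0:ℝ) ≤ 2 * Real.pi * a),
            ← Real.inv_rpow (by positivity : (0:ℝ) ≤ 2 * Real.pi * s)]
      _ = ((2 * Real.pi * a)⁻¹ * (2 * Real.pi * s)⁻¹ * (2 * Real.pi * (a * s / (a + s))))
            ^ ((d : ℝ) / 2) := by
          rw [← Real.mul_rpow (by positivity) (by positivity),
            ← Real.mul_rpow (by positivity) (by positivity)]
      _ = ((2 * Real.pi)⁻¹ * (l ^ 2 + 2 * s)⁻¹) ^ ((d : ℝ) / 2) := by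
          congr 1
          rw [← hL]
          have hASne : a + s ≠ 0 := by positivity
          field_simp
      _ = (2 * Real.pi) ^ (-((d : ℝ) / 2)) * (l ^ 2 + 2 * s) ^ (-((d : ℝ) / 2)) := by
          rw [Real.mul_rpow (by positivity) (by positivity),
            Real.rpow_neg (by positivity : (0:ℝ) ≤ 2 * Real.pi),
            Real.rpow_neg (by positivity : (0:ℝ) ≤ l ^ 2 + 2 * s),
            ← Real.inv_rpow (by positivity : (0:ℝ) ≤ 2 * Real.pi),
            ← Real.inv_rpow (by positivity : (0:ℝ) ≤ l ^ 2 + 2 * s)]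
  -- final algebra
  have main : (d : ℝ) * (K * (s / a ^ 2) * (J ^ d / (2 * b0))) + -(K * ((d : ℝ) * s / a)) * J ^ d
      = -((2 * Real.pi) ^ (-(d : ℝ) / 2) * (l ^ 2 + 2 * s) ^ (-(d : ℝ) / 2)
          * ((d : ℝ) * s / a) * (1 - s / (l ^ 2 + 2 * s))) := by
    rw [show (d : ℝ) * (K * (s / a ^ 2) * (J ^ d / (2 * b0))) + -(K * ((d : ℝ) * s / a)) * J ^ d
        = (K * J ^ d) * ((d : ℝ) * (s / a ^ 2) / (2 * b0) - (d : ℝ) * s / a) by ring]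
    rw [hKJ, hb0def, ← hL]
    have hASne : a + s ≠ 0 := by positivity
    field_simp
    ring
  exact ⟨main, by
    rw [main]
    have hd0 : (0:ℝ) < (d : ℝ) := by exact_mod_cast hd
    have h5 : 0 < 1 - s / (l ^ 2 + 2 * s) := by
      rw [sub_pos, div_lt_one hLpos]
      nlinarith
    have : 0 < (2 * Real.pi) ^ (-(d : ℝ) / 2) * (l ^ 2 + 2 * s) ^ (-(d : ℝ) / 2)
        * ((d : ℝ) * s / a) * (1 - s / (l ^ 2 + 2 * s)) :=
      mul_pos (mul_pos (mul_pos (Real.rpow_pos_of_pos (by positivity) _)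
        (Real.rpow_pos_of_pos hLpos _)) (div_pos (mul_pos hd0 hs) hA)) h5
    exact neg_ne_zero.mpr this.ne'⟩
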